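/- Let γ ≥ 0, c > 0 and d be real constants, and let h : ℝ → ℝ be a twice continuously differentiable 2π-periodic function satisfying γ·h''(x)/(1+h'(x)²)^{3/2} − c·h(x) = d for every x ∈ ℝ. Then h is constant, equal to −d/c. -/

import Mathlib

open Filter Topology Set

/-- At a global maximum of a `C²` function, the second derivative is nonpositive. -/
lemma aux_second_deriv_nonpos {h : ℝ → ℝ} (hreg : ContDiff ℝ 2 h) {x₀ : ℝ}
    (hmax : ∀ x, h x ≤ h x₀) : deriv (deriv h) x₀ ≤ 0 := by
  by_contra hpos
  push_neg at hpos
  set g := deriv h with hg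
  have hg0 : g x₀ = 0 := by
    exact IsLocalMax.deriv_eq_zero (by filter_upwards with x using hmax x)
  have hgdiff : Differentiable ℝ g := (hreg.iterate_deriv' 1 1).differentiable (by simp)
  have hD : HasDerivAt g (deriv g x₀) x₀ := (hgdiff x₀).hasDerivAt
  -- slope of g tends to deriv g x₀ > 0, so g > 0 on a right neighborhood
  have hslope : Tendsto (slope g x₀) (𝓝[>] x₀) (𝓝 (deriv g x₀)) :=
    ((hasDerivAt_iff_tendsto_slope.1 hD).mono_left
      (nhdsWithin_mono _ (fun x hx => ne_of_gt hx)))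
  have hev : ∀ᶠ x in 𝓝[>] x₀, 0 < slope g x₀ x :=
    hslope.eventually (eventually_gt_nhds hpos)
  have hev' : ∀ᶠ x in 𝓝[>] x₀, 0 < g x := by
    filter_upwards [hev, self_mem_nhdsWithin] with x hx hx'
    have hs : slope g x₀ x = g x / (x - x₀) := by
      simp [slope_def_field, hg0]
    rw [hs] at hx
    rcases div_pos_iff.1 hx with ⟨h1, _⟩ | ⟨_, h2⟩
    · exact h1
    · have : (0:ℝ) < x - x₀ := sub_pos.2 hx'
      linarith
  obtain ⟨b, hb, hIoo⟩ := (nhdsGT_basis x₀).eventually_iff.1 hev'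
  -- h is strictly monotone on [x₀, b]
  have hmono : StrictMonoOn h (Icc x₀ b) := by
    apply strictMonoOn_of_deriv_pos (convex_Icc _ _)
      (hreg.continuous.continuousOn)
    intro x hx
    rw [interior_Icc] at hx
    exact hIoo hx
  have : h x₀ < h b := hmono ⟨le_rfl, hb.le⟩ ⟨hb.le, le_rfl⟩ hb
  exact absurd (hmax b) (not_le.2 this)

/-- Rigidity for the fluid–air interface: a `2π`-periodic `C²` solution of
`γ·κ(h) − c·h = d` with `γ ≥ 0` and `c > 0` is constant, equal to `−d/c`. -/
theorem stmt_15 (γ c d : ℝ) (hγ : 0 ≤ γ) (hc : 0 < c)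
    (h : ℝ → ℝ) (hreg : ContDiff ℝ 2 h)
    (hper : ∀ x : ℝ, h (x + 2 * Real.pi) = h x)
    (heq : ∀ x : ℝ,
      γ * deriv (deriv h) x / (1 + deriv h x ^ 2) ^ ((3 : ℝ) / 2) - c * h x = d) :
    ∀ x : ℝ, h x = -d / c := by
  have hP : Function.Periodic h (2 * Real.pi) := hper
  have hcont : Continuous h := hreg.continuous
  -- key: a global max/min bound via compactness on [0, 2π]
  have key : ∀ (f : ℝ → ℝ), Continuous f → Function.Periodic f (2 * Real.pi) →
      ∃ x₀, ∀ x, f x ≤ f x₀ := by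
    intro f hf hPf
    obtain ⟨x₀, _, hx₀⟩ := isCompact_Icc.exists_isMaxOn
      (nonempty_Icc.2 (by positivity : (0:ℝ) ≤ 2 * Real.pi)) hf.continuousOn
    refine ⟨x₀, fun x => ?_⟩
    obtain ⟨y, hy, hxy⟩ := hPf.exists_mem_Ico₀ Real.two_pi_pos x
    rw [hxy]
    exact hx₀ (Ico_subset_Icc_self hy)
  have pospow : ∀ x : ℝ, (0:ℝ) < (1 + deriv h x ^ 2) ^ ((3:ℝ)/2) := by
    intro x
    apply Real.rpow_pos_of_pos
    positivity
  -- at a max, h ≤ -d/c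
  obtain ⟨x₁, hx₁⟩ := key h hcont hP
  obtain ⟨x₂, hx₂⟩ := key (fun x => -h x) (hcont.neg) (by intro x; simp [hP x])
  have hx₂' : ∀ x, h x₂ ≤ h x := fun x => by have := hx₂ x; linarith
  have hupper : ∀ x, h x ≤ -d / c := by
    intro x
    have h2 : deriv (deriv h) x₁ ≤ 0 := aux_second_deriv_nonpos hreg hx₁
    have := heq x₁
    have hnum : γ * deriv (deriv h) x₁ / (1 + deriv h x₁ ^ 2) ^ ((3:ℝ)/2) ≤ 0 :=
      div_nonpos_iff.2 (Or.inr ⟨mul_nonpos_of_nonneg_of_nonpos hγ h2, (pospow x₁).le⟩)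
    have : c * h x₁ ≤ -d := by linarith
    have h1 : h x₁ ≤ -d / c := by
      rw [le_div_iff₀ hc] at *
      nlinarith
    exact (hx₁ x).trans h1
  have hlower : ∀ x, -d / c ≤ h x := by
    intro x
    have hmin : ∀ y, -h y ≤ -h x₂ := hx₂
    have h2 : 0 ≤ deriv (deriv h) x₂ := by
      have := aux_second_deriv_nonpos (hreg.neg) (fun y => hx₂ y)
      have e1 : deriv (deriv (fun y => -h y)) x₂ = - deriv (deriv h) x₂ := by
        have : deriv (fun y => -h y) = fun y => -deriv h y := by
          funext y; exact deriv.neg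
        rw [this, deriv.fun_neg]
      linarith [e1 ▸ this]
    have := heq x₂
    have hnum : 0 ≤ γ * deriv (deriv h) x₂ / (1 + deriv h x₂ ^ 2) ^ ((3:ℝ)/2) :=
      div_nonneg (mul_nonneg hγ h2) (pospow x₂).le
    have : -d ≤ c * h x₂ := by linarith
    have h1 : -d / c ≤ h x₂ := by
      rw [div_le_iff₀ hc]
      nlinarith
    exact h1.trans (hx₂' x)
  exact fun x => le_antisymm (hupper x) (hlower x)
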